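/- Let η ∈ {A,B,C}^{ℤ/Nℤ} and for x in ℤ/Nℤ let η^{x,x+1} denote the configuration with the values at x and x+1 swapped. Let c^{αβ} (α ≠ β ∈ {A,B,C}) be nonnegative rates satisfying the pairwise balance c^{AB} + c^{BC} + c^{CA} = c^{BA} + c^{CB} + c^{AC}, set c_x(η) = Σ_{α≠β} c^{αβ} 1_{η(x)=α} 1_{η(x+1)=β}, and let L f(η) = Σ_x c_x(η)[f(η^{x,x+1}) − f(η)]. Then any probability measure μ on {A,B,C}^{ℤ/Nℤ} that is invariant under each transposition, μ(η^{x,x+1}) = μ(η) for all η and x, satisfies Σ_η μ(η) L f(η) = 0 for every f; i.e. μ is invariant for the generator L. -/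

import Mathlib

inductive Species where
  | A | B | C
deriving DecidableEq

instance : Fintype Species :=
  ⟨{Species.A, Species.B, Species.C}, fun x => by cases x <;> simp⟩

open Species

instance : MeasurableSpace Species := ⊤

/-- The configuration obtained from `η` by exchanging the particles at sites `x` and
`x+1` of the discrete ring `ℤ/Nℤ`. -/
def swapConf {N : ℕ} (η : ZMod N → Species) (x : ZMod N) : ZMod N → Species :=
  fun z => if z = x then η (x + 1) else if z = x + 1 then η x else η z

/-- The jump rate at the bond `{x, x+1}`: `c_x(η) = Σ_{α≠β} c^{αβ} 1_{η(x)=α} 1_{η(x+1)=β}`. -/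
noncomputable def bondRate {N : ℕ} (crate : Species → Species → ℝ)
    (η : ZMod N → Species) (x : ZMod N) : ℝ :=
  ∑ α : Species, ∑ β : Species,
    (if α = β then 0 else crate α β)
      * (if η x = α then 1 else 0) * (if η (x + 1) = β then 1 else 0)

/-- The generator `L f(η) = Σ_x c_x(η)[f(η^{x,x+1}) − f(η)]`. -/
noncomputable def generator {N : ℕ} [NeZero N] (crate : Species → Species → ℝ)
    (f : (ZMod N → Species) → ℝ) (η : ZMod N → Species) : ℝ :=
  ∑ x : ZMod N, bondRate crate η x * (f (swapConf η x) - f η)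

noncomputable def Drate (crate : Species → Species → ℝ) (α β : Species) : ℝ :=
  if α = β then 0 else crate α β

lemma univSpecies : (Finset.univ : Finset Species) = {A, B, C} := by decide

lemma sumSpecies (g : Species → ℝ) : ∑ s : Species, g s = g A + g B + g C := by
  rw [univSpecies]
  simp [Finset.sum_insert, add_assoc]

lemma bondRate_eq {N : ℕ} (crate : Species → Species → ℝ)
    (η : ZMod N → Species) (x : ZMod N) :
    bondRate crate η x = Drate crate (η x) (η (x + 1)) := by
  unfold bondRate Drate
  rw [sumSpecies]
  simp only [sumSpecies]
  cases hα : η x <;> cases hβ : η (x+1) <;> simp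

lemma swap_swap {N : ℕ} (η : ZMod N → Species) (x : ZMod N) :
    swapConf (swapConf η x) x = η := by
  funext z
  simp only [swapConf]
  split_ifs with h1 h2 <;> simp_all

lemma swap_at {N : ℕ} (η : ZMod N → Species) (x : ZMod N) :
    swapConf η x x = η (x + 1) := by simp [swapConf]

lemma swap_at_succ {N : ℕ} (η : ZMod N → Species) (x : ZMod N) :
    swapConf η x (x + 1) = η x := by
  simp only [swapConf]
  split_ifs with h
  · rw [h]
  · rfl

noncomputable def hpot (crate : Species → Species → ℝ) : Species → ℝ
  | A => 0
  | B => crate A B - crate B A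
  | C => crate A C - crate C A

lemma Drate_diff (crate : Species → Species → ℝ)
    (hbal : crate A B + crate B C + crate C A = crate B A + crate C B + crate A C)
    (α β : Species) :
    Drate crate β α - Drate crate α β = hpot crate α - hpot crate β := by
  cases α <;> cases β <;> simp [Drate, hpot] <;> linarith

/-- If the rates are nonnegative and satisfy the pairwise balance
`c^{AB} + c^{BC} + c^{CA} = c^{BA} + c^{CB} + c^{AC}`, then any probability measure `μ`
on `{A,B,C}^{ℤ/Nℤ}` that is invariant under every nearest-neighbour transposition is
invariant for the generator `L`: `Σ_η μ(η) L f(η) = 0` for every `f`. -/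
theorem transposition_invariant_measure_is_invariant
    (N : ℕ) [NeZero N] (crate : Species → Species → ℝ)
    (hpos : ∀ α β, 0 ≤ crate α β)
    (hbal : crate A B + crate B C + crate C A = crate B A + crate C B + crate A C)
    (μ : (ZMod N → Species) → ℝ)
    (hμpos : ∀ η, 0 ≤ μ η) (hμsum : ∑ η : ZMod N → Species, μ η = 1)
    (hinv : ∀ (η : ZMod N → Species) (x : ZMod N), μ (swapConf η x) = μ η) :
    ∀ f : (ZMod N → Species) → ℝ,
      ∑ η : ZMod N → Species, μ η * generator crate f η = 0 := by
  intro f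
  have key : ∀ x : ZMod N,
      ∑ η : ZMod N → Species, μ η * (bondRate crate η x * (f (swapConf η x) - f η))
      = ∑ η : ZMod N → Species,
          μ η * f η * (hpot crate (η x) - hpot crate (η (x + 1))) := by
    intro x
    have hre : ∑ η : ZMod N → Species, μ η * (bondRate crate η x * f (swapConf η x))
        = ∑ η : ZMod N → Species, μ η * (bondRate crate (swapConf η x) x * f η) := by
      have invol : Function.Involutive (fun η : ZMod N → Species => swapConf η x) :=
        fun η => swap_swap η x
      exact Fintype.sum_equiv invol.toPerm _ _
        (fun η => by simp [Function.Involutive.coe_toPerm, swap_swap, hinv])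
    calc ∑ η : ZMod N → Species, μ η * (bondRate crate η x * (f (swapConf η x) - f η))
        = (∑ η : ZMod N → Species, μ η * (bondRate crate η x * f (swapConf η x)))
          - ∑ η : ZMod N → Species, μ η * (bondRate crate η x * f η) := by
          rw [← Finset.sum_sub_distrib]; congr 1; funext η; ring
      _ = ∑ η : ZMod N → Species,
            μ η * f η * (bondRate crate (swapConf η x) x - bondRate crate η x) := by
          rw [hre, ← Finset.sum_sub_distrib]; congr 1; funext η; ring
      _ = _ := by
          congr 1; funext η
          rw [bondRate_eq, bondRate_eq, swap_at, swap_at_succ,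
            Drate_diff crate hbal]
  have gexp : ∑ η : ZMod N → Species, μ η * generator crate f η
      = ∑ x : ZMod N, ∑ η : ZMod N → Species,
          μ η * (bondRate crate η x * (f (swapConf η x) - f η)) := by
    rw [Finset.sum_comm]
    congr 1; funext η
    rw [generator, Finset.mul_sum]
  rw [gexp]
  simp only [key]
  rw [Finset.sum_comm]
  apply Finset.sum_eq_zero
  intro η _
  rw [← Finset.mul_sum]
  have : ∑ x : ZMod N, (hpot crate (η x) - hpot crate (η (x + 1))) = 0 := by
    rw [Finset.sum_sub_distrib]
    have : ∑ x : ZMod N, hpot crate (η (x + 1)) = ∑ x : ZMod N, hpot crate (η x) :=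
      Fintype.sum_equiv (Equiv.addRight 1) _ _ (fun x => rfl)
    rw [this, sub_self]
  rw [this, mul_zero]
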